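/- Let θ be a positive integer. Then the polynomial G(t) = Σ_{k=1}^n S(n,k) θ(θ-1)···(θ-k+1) t^k / θ^n has only real, nonpositive zeros. -/
import Mathlib
open Finset Polynomial

def stirling2 : ℕ → ℕ → ℕ
  | 0, 0 => 1
  | 0, _ + 1 => 0
  | _ + 1, 0 => 0
  | n + 1, k + 1 => (k + 1) * stirling2 n (k + 1) + stirling2 n k

lemma stirling2_eq_zero : ∀ n k : ℕ, n < k → stirling2 n k = 0
  | 0, _ + 1, _ => rfl
  | n + 1, k + 1, h => by
    have h1 : n < k + 1 := by omega
    have h2 : n < k := by omega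
    simp [stirling2, stirling2_eq_zero n (k+1) h1, stirling2_eq_zero n k h2]

lemma stirling2_zero_right : ∀ n : ℕ, 1 ≤ n → stirling2 n 0 = 0
  | _ + 1, _ => rfl

noncomputable def Fp (θ n : ℕ) : ℝ[X] :=
  ∑ k ∈ Icc 1 n, C ((stirling2 n k : ℝ) * ∏ j ∈ range k, ((θ : ℝ) - j)) * X ^ k

lemma Fp_rec (θ n : ℕ) (hn : 1 ≤ n) :
    Fp θ (n + 1) = X * ((1 - X) * derivative (Fp θ n) + C (θ : ℝ) * Fp θ n) := by
  set a : ℕ → ℝ := fun k => (stirling2 n k : ℝ) * ∏ j ∈ range k, ((θ : ℝ) - j) with ha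
  set g : ℕ → ℝ[X] := fun m => C (((θ : ℝ) + 1 - m) * a (m - 1)) * X ^ m with hg
  have key : X * ((1 - X) * derivative (Fp θ n) + C (θ : ℝ) * Fp θ n)
      = ∑ k ∈ Icc 1 n, (C ((k : ℝ) * a k) * X ^ k + g (k + 1)) := by
    rw [Fp, derivative_sum, Finset.mul_sum, Finset.mul_sum, ← Finset.sum_add_distrib,
      Finset.mul_sum]
    refine Finset.sum_congr rfl fun k hk => ?_
    obtain ⟨hk1, hk2⟩ := Finset.mem_Icc.mp hk
    obtain ⟨j, rfl⟩ : ∃ j, k = j + 1 := ⟨k - 1, by omega⟩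
    simp only [hg, derivative_C_mul_X_pow, Nat.add_sub_cancel, ha, Finset.prod_range_succ]
    push_cast
    simp only [map_mul, map_add, map_sub, map_natCast, map_one]
    ring
  rw [key, Finset.sum_add_distrib]
  have h1 : (∑ k ∈ Icc 1 n, C ((k : ℝ) * a k) * X ^ k)
      = ∑ k ∈ Icc 1 (n + 1), C ((k : ℝ) * a k) * X ^ k := by
    rw [Finset.sum_Icc_succ_top (by omega : 1 ≤ n + 1)]
    have : a (n + 1) = 0 := by
      simp [ha, stirling2_eq_zero n (n + 1) (by omega)]
    simp [this]
  have h2 : (∑ k ∈ Icc 1 n, g (k + 1)) = ∑ k ∈ Icc 1 (n + 1), g k := by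
    have hins : Icc 1 (n + 1) = insert 1 (Icc 2 (n + 1)) := by
      ext x; simp [Finset.mem_Icc, Finset.mem_insert]; omega
    have hmap : ∑ k ∈ Icc 1 n, g (k + 1) = ∑ k ∈ Icc 2 (n + 1), g k := by
      rw [show (2 : ℕ) = 1 + 1 from rfl, ← Finset.map_add_right_Icc 1 n 1, Finset.sum_map]
      rfl
    have hg1 : g 1 = 0 := by
      have : a 0 = 0 := by simp [ha, stirling2_zero_right n hn]
      simp [hg, this]
    rw [hmap, hins, Finset.sum_insert (by simp), hg1, zero_add]
  rw [h1, h2, ← Finset.sum_add_distrib, Fp]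
  refine Finset.sum_congr rfl fun k hk => ?_
  obtain ⟨hk1, hk2⟩ := Finset.mem_Icc.mp hk
  obtain ⟨j, rfl⟩ : ∃ j, k = j + 1 := ⟨k - 1, by omega⟩
  simp only [hg, Nat.add_sub_cancel, ha, show stirling2 (n + 1) (j + 1)
      = (j + 1) * stirling2 n (j + 1) + stirling2 n j from rfl,
    Finset.prod_range_succ]
  push_cast
  simp only [map_mul, map_add, map_sub, map_natCast, map_one]
  ring


lemma eval_derivative_prod_X_sub_C (s : Finset ℕ) (r : ℕ → ℝ) (i : ℕ) (hi : i ∈ s) :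
    eval (r i) (derivative (∏ j ∈ s, (X - C (r j)))) = ∏ j ∈ s.erase i, (r i - r j) := by
  rw [← Finset.mul_prod_erase s _ hi, derivative_mul, derivative_X_sub_C]
  simp [eval_prod]

lemma exists_root_between {p : ℝ[X]} {x y : ℝ} (hxy : x ≤ y)
    (h : eval x p * eval y p < 0) : ∃ z ∈ Set.Ioo x y, eval z p = 0 := by
  rcases lt_or_ge (eval x p) 0 with hx | hx
  · have hy : 0 < eval y p := by nlinarith
    have := intermediate_value_Ioo hxy (p.continuous.continuousOn (s := Set.Icc x y))
    obtain ⟨z, hz, hz0⟩ := this (Set.mem_Ioo.mpr ⟨hx, hy⟩)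
    exact ⟨z, hz, hz0⟩
  · have hx' : 0 < eval x p := by
      rcases hx.lt_or_eq with h' | h'
      · exact h'
      · exfalso; rw [← h'] at h; simp at h
    have hy : eval y p < 0 := by nlinarith
    have := intermediate_value_Ioo' hxy (p.continuous.continuousOn (s := Set.Icc x y))
    obtain ⟨z, hz, hz0⟩ := this (Set.mem_Ioo.mpr ⟨hy, hx'⟩)
    exact ⟨z, hz, hz0⟩

lemma exists_neg_far {p : ℝ[X]} (hdeg : 0 < p.natDegree) (hlead : 0 < p.leadingCoeff)
    (b : ℝ) : ∃ t : ℝ, t < b ∧ 0 < (-1 : ℝ) ^ p.natDegree * eval t p := by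
  set m := p.natDegree with hm
  set q : ℝ[X] := C ((-1 : ℝ) ^ m) * p.comp (-X) with hq
  have hnegX : (-X : ℝ[X]).natDegree = 1 := by simp
  have hq0 : q.leadingCoeff = p.leadingCoeff := by
    rw [hq, leadingCoeff_mul, leadingCoeff_C, leadingCoeff_comp (by omega)]
    simp only [leadingCoeff_neg, leadingCoeff_X, hnegX]
    rw [← hm]
    ring_nf
    simp [Even.neg_one_pow (⟨m, by ring⟩ : Even (m * 2))]
  have hqdeg : 0 < q.degree := by
    have : q.natDegree = m := by
      rw [hq, natDegree_C_mul (pow_ne_zero _ (by norm_num : (-1:ℝ) ≠ 0)),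
        natDegree_comp, hnegX, mul_one]
    rw [← natDegree_pos_iff_degree_pos, this]; omega
  have ht : Filter.Tendsto (fun x => eval x q) Filter.atTop Filter.atTop :=
    q.tendsto_atTop_of_leadingCoeff_nonneg hqdeg (by rw [hq0]; exact hlead.le)
  have h1 : ∀ᶠ x in Filter.atTop, (1 : ℝ) ≤ eval x q := ht.eventually_ge_atTop 1
  have h2 : ∀ᶠ x in Filter.atTop, -b + 1 ≤ x := Filter.eventually_ge_atTop (-b + 1)
  obtain ⟨x, hx1, hx2⟩ := (h1.and h2).exists
  refine ⟨-x, by linarith, ?_⟩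
  have : eval x q = (-1 : ℝ) ^ m * eval (-x) p := by
    rw [hq, eval_mul, eval_C, eval_comp]; simp
  rw [← this]; linarith

lemma Fp_factor (θ : ℕ) (hθ : 1 ≤ θ) :
    ∀ n, 1 ≤ n → ∃ (c : ℝ) (ρ : ℕ → ℝ), 0 < c ∧ ρ 0 = 0 ∧
      (∀ i j, i < j → j < min n θ → ρ j < ρ i) ∧
      Fp θ n = C c * ∏ i ∈ range (min n θ), (X - C (ρ i)) := by
  intro n hn
  induction n, hn using Nat.le_induction with
  | base =>
    refine ⟨θ, fun _ => 0, by positivity, rfl, fun i j hij hj => by omega, ?_⟩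
    have hmin : min 1 θ = 1 := by omega
    rw [Fp, hmin]
    simp [show stirling2 1 1 = 1 from rfl]
  | succ n hn ih =>
    obtain ⟨c, ρ, hc, hρ0, hstrict, hfac⟩ := ih
    set m := min n θ with hm
    have hm1 : 1 ≤ m := by omega
    have hanti : ∀ i j, i ≤ j → j < m → ρ j ≤ ρ i := by
      intro i j hij hj
      rcases eq_or_lt_of_le hij with rfl | hlt
      · exact le_rfl
      · exact (hstrict _ _ hlt hj).le
    have hρle : ∀ i, i < m → ρ i ≤ 0 := fun i hi => hρ0 ▸ hanti 0 i (Nat.zero_le _) hi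
    have hPmonic : (∏ i ∈ range m, (X - C (ρ i))).Monic :=
      monic_prod_of_monic _ _ fun i _ => monic_X_sub_C _
    have hfdeg : (Fp θ n).natDegree = m := by
      rw [hfac, natDegree_C_mul hc.ne', natDegree_prod _ _ (fun i _ => X_sub_C_ne_zero _)]
      simp [natDegree_X_sub_C]
    have hflead : (Fp θ n).leadingCoeff = c := by
      rw [hfac, leadingCoeff_mul, leadingCoeff_C, hPmonic.leadingCoeff, mul_one]
    set h : ℝ[X] := (1 - X) * derivative (Fp θ n) + C (θ : ℝ) * Fp θ n with hh
    have hrec : Fp θ (n + 1) = X * h := Fp_rec θ n hn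
    -- sign of h at the roots of Fp θ n
    have hsign : ∀ i, i < m → 0 < (-1 : ℝ) ^ i * eval (ρ i) h := by
      intro i hi
      have hfeval : eval (ρ i) (Fp θ n) = 0 := by
        rw [hfac, eval_mul, eval_C, eval_prod]
        rw [Finset.prod_eq_zero (Finset.mem_range.mpr hi) (by simp), mul_zero]
      have hfd : eval (ρ i) (derivative (Fp θ n))
          = c * ∏ j ∈ (range m).erase i, (ρ i - ρ j) := by
        rw [hfac, derivative_C_mul, eval_mul, eval_C,
          eval_derivative_prod_X_sub_C _ _ i (Finset.mem_range.mpr hi)]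
      have heval : eval (ρ i) h
          = (1 - ρ i) * (c * ∏ j ∈ (range m).erase i, (ρ i - ρ j)) := by
        rw [hh]; simp [hfeval, hfd]
      have hsplit : (range m).erase i = range i ∪ Ico (i + 1) m := by
        ext x
        simp only [Finset.mem_erase, Finset.mem_union, Finset.mem_range, Finset.mem_Ico]
        omega
      have hdisj : Disjoint (range i) (Ico (i + 1) m) := by
        simp only [Finset.disjoint_left, Finset.mem_range, Finset.mem_Ico]
        intro x hx; omega
      have hB : 0 < ∏ j ∈ Ico (i + 1) m, (ρ i - ρ j) := by
        refine Finset.prod_pos fun j hj => ?_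
        obtain ⟨hj1, hj2⟩ := Finset.mem_Ico.mp hj
        have := hstrict i j (by omega) hj2
        linarith
      have hA : 0 < (-1 : ℝ) ^ i * ∏ j ∈ range i, (ρ i - ρ j) := by
        have heq : (-1 : ℝ) ^ i * ∏ j ∈ range i, (ρ i - ρ j)
            = ∏ j ∈ range i, (ρ j - ρ i) := by
          have : ∀ j ∈ range i, (ρ j - ρ i) = (-1) * (ρ i - ρ j) := fun j _ => by ring
          rw [Finset.prod_congr rfl this, Finset.prod_mul_distrib, Finset.prod_const,
            Finset.card_range]
        rw [heq]
        refine Finset.prod_pos fun j hj => ?_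
        have := hstrict j i (Finset.mem_range.mp hj) hi
        linarith
      have h1ρ : 0 < 1 - ρ i := by have := hρle i hi; linarith
      rw [heval, hsplit, Finset.prod_union hdisj]
      have := mul_pos (mul_pos (mul_pos h1ρ hc) hB) hA
      refine lt_of_lt_of_eq this (by ring)
    -- roots between consecutive roots of Fp θ n
    have hroot : ∀ i, i + 1 < m → ∃ x, eval x h = 0 ∧ ρ (i + 1) < x ∧ x < ρ i := by
      intro i hi
      have h1 := hsign i (by omega)
      have h2 := hsign (i + 1) hi
      have hlt : ρ (i + 1) < ρ i := hstrict i (i + 1) (by omega) hi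
      set u := (-1 : ℝ) ^ i with hu'
      have hu : u * u = 1 := by rw [hu', ← mul_pow]; norm_num
      have hp2 : (-1 : ℝ) ^ (i + 1) = -u := by rw [hu', pow_succ]; ring
      rw [hp2] at h2
      have hE2 : u * eval (ρ (i + 1)) h < 0 := by linarith
      have hprod : eval (ρ (i + 1)) h * eval (ρ i) h < 0 := by
        have hmul := mul_neg_of_neg_of_pos hE2 h1
        have : (u * eval (ρ (i + 1)) h) * (u * eval (ρ i) h)
            = (u * u) * (eval (ρ (i + 1)) h * eval (ρ i) h) := by ring
        rw [this, hu, one_mul] at hmul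
        exact hmul
      obtain ⟨z, hz, hz0⟩ := exists_root_between hlt.le hprod
      exact ⟨z, hz0, hz.1, hz.2⟩
    -- degree bounds for h
    have hdle : h.natDegree ≤ m := by
      rw [hh]
      refine le_trans (natDegree_add_le _ _) (max_le ?_ ?_)
      · refine le_trans natDegree_mul_le ?_
        have h1 : (1 - X : ℝ[X]).natDegree ≤ 1 :=
          le_trans (natDegree_sub_le _ _) (by simp)
        have h2 : (derivative (Fp θ n)).natDegree ≤ m - 1 := by
          have := natDegree_derivative_le (Fp θ n)
          rw [hfdeg] at this; exact this
        omega
      · refine le_trans natDegree_mul_le ?_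
        simp [hfdeg]
    have hcoeffm : h.coeff m = ((θ : ℝ) - m) * c := by
      obtain ⟨m', hm'⟩ : ∃ m', m = m' + 1 := ⟨m - 1, by omega⟩
      have hfm : (Fp θ n).coeff m = c := by
        have : (Fp θ n).coeff ((Fp θ n).natDegree) = (Fp θ n).leadingCoeff := rfl
        rw [hfdeg, hflead] at this; exact this
      have hfm1 : (Fp θ n).coeff (m + 1) = 0 :=
        coeff_eq_zero_of_natDegree_lt (by omega)
      rw [hh, coeff_add, coeff_C_mul, hfm, sub_mul, one_mul, coeff_sub, hm',
        coeff_X_mul, coeff_derivative, coeff_derivative, ← hm', hfm1, hfm]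
      push_cast [hm']
      ring
    -- unified root data
    obtain ⟨d, hdm, hd1, hd, Hall⟩ :
        ∃ d, d ≤ m ∧ d + 1 = min (n + 1) θ ∧ h.natDegree ≤ d ∧
          ∀ i, i < d → ∃ x, eval x h = 0 ∧ x < ρ i ∧ (i + 1 < m → ρ (i + 1) < x) := by
      by_cases hcase : n + 1 ≤ θ
      · have hmn : m = n := by omega
        refine ⟨m, le_rfl, by omega, hdle, ?_⟩
        have hlead : h.natDegree = m ∧ 0 < h.leadingCoeff := by
          have hne : h.coeff m ≠ 0 := by
            rw [hcoeffm]
            have : (m : ℝ) < θ := by exact_mod_cast (by omega : m < θ)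
            exact ne_of_gt (by nlinarith)
          have hdeq : h.natDegree = m := le_antisymm hdle (le_natDegree_of_ne_zero hne)
          refine ⟨hdeq, ?_⟩
          have : h.leadingCoeff = h.coeff m := by rw [leadingCoeff, hdeq]
          rw [this, hcoeffm]
          have hmθ : (m : ℝ) < θ := by exact_mod_cast (by omega : m < θ)
          nlinarith
        obtain ⟨t, ht1, ht2⟩ := exists_neg_far (by omega : 0 < h.natDegree) hlead.2 (ρ (m - 1))
        rw [hlead.1] at ht2
        -- root below ρ (m-1)
        have hsg := hsign (m - 1) (by omega)
        obtain ⟨m', hm'⟩ : ∃ m', m = m' + 1 := ⟨m - 1, by omega⟩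
        have hm'' : m - 1 = m' := by omega
        rw [hm''] at hsg ht1
        set u := (-1 : ℝ) ^ m' with hu'
        have hu : u * u = 1 := by rw [hu', ← mul_pow]; norm_num
        have hp2 : (-1 : ℝ) ^ m = -u := by rw [hu', hm', pow_succ]; ring
        rw [hp2] at ht2
        have hE : u * eval t h < 0 := by linarith
        have hprod : eval t h * eval (ρ m') h < 0 := by
          have hmul := mul_neg_of_neg_of_pos hE hsg
          have : (u * eval t h) * (u * eval (ρ m') h)
              = (u * u) * (eval t h * eval (ρ m') h) := by ring
          rw [this, hu, one_mul] at hmul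
          exact hmul
        obtain ⟨z, hz, hz0⟩ := exists_root_between ht1.le hprod
        intro i hi
        by_cases hi' : i + 1 < m
        · obtain ⟨x, hx0, hx1, hx2⟩ := hroot i hi'
          exact ⟨x, hx0, hx2, fun _ => hx1⟩
        · have hieq : i = m' := by omega
          subst hieq
          exact ⟨z, hz0, hz.2, fun hcon => absurd hcon hi'⟩
      · have hmθ : m = θ := by omega
        refine ⟨m - 1, by omega, by omega, ?_, ?_⟩
        · refine natDegree_le_iff_coeff_eq_zero.mpr fun N hN => ?_
          rcases eq_or_lt_of_le (show m ≤ N by omega) with rfl | hNlt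
          · rw [hcoeffm, hmθ]; simp
          · exact coeff_eq_zero_of_natDegree_lt (by omega)
        · intro i hi
          have hi' : i + 1 < m := by omega
          obtain ⟨x, hx0, hx1, hx2⟩ := hroot i hi'
          exact ⟨x, hx0, hx2, fun _ => hx1⟩
    -- choose the roots
    classical
    set s : ℕ → ℝ := fun i => if hi : i < d then (Hall i hi).choose else 0 with hsdef
    have hs : ∀ i (hi : i < d),
        eval (s i) h = 0 ∧ s i < ρ i ∧ (i + 1 < m → ρ (i + 1) < s i) := by
      intro i hi
      simp only [hsdef, dif_pos hi]
      exact (Hall i hi).choose_spec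
    have hsneg : ∀ i, i < d → s i < 0 := fun i hi =>
      lt_of_lt_of_le (hs i hi).2.1 (hρle i (lt_of_lt_of_le hi hdm))
    have hsstrict : ∀ i j, i < j → j < d → s j < s i := by
      intro i j hij hj
      have hi : i < d := by omega
      have hjm : j < m := by omega
      have h1 : s j < ρ j := (hs j hj).2.1
      have h2 : ρ j ≤ ρ (i + 1) := hanti (i + 1) j (by omega) hjm
      have h3 : ρ (i + 1) < s i := (hs i hi).2.2 (by omega)
      linarith
    have hsinj : ∀ i ∈ (range d).val, ∀ j ∈ (range d).val, s i = s j → i = j := by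
      intro i hi j hj hij
      rw [Finset.mem_val, Finset.mem_range] at hi hj
      by_contra hne
      rcases Nat.lt_or_ge i j with hlt | hge
      · have := hsstrict i j hlt hj; linarith
      · have hlt : j < i := by omega
        have := hsstrict j i hlt hi; linarith
    have hne0 : h ≠ 0 := by
      intro hcon
      have := hsign 0 (by omega)
      rw [hcon] at this
      simp at this
    set M : Multiset ℝ := Multiset.map s (range d).val with hM
    have hMnodup : M.Nodup := Multiset.Nodup.map_on hsinj (range d).nodup
    have hMle : M ≤ h.roots := by
      rw [Multiset.le_iff_count]
      intro x
      by_cases hx : x ∈ M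
      · have h1 : Multiset.count x M ≤ 1 := Multiset.nodup_iff_count_le_one.mp hMnodup x
        obtain ⟨i, hi, rfl⟩ := Multiset.mem_map.mp hx
        have hi' : i < d := Finset.mem_range.mp hi
        have h2 : 1 ≤ Multiset.count (s i) h.roots := by
          rw [count_roots]
          exact (rootMultiplicity_pos hne0).mpr (hs i hi').1
        omega
      · simp [Multiset.count_eq_zero_of_notMem hx]
    have hcardM : Multiset.card M = d := by simp [hM]
    have hcardroots : Multiset.card h.roots = d := by
      have h1 := Multiset.card_le_card hMle
      have h2 := h.card_roots'
      omega
    have hndeg : h.natDegree = d := by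
      have h2 := h.card_roots'
      omega
    have hMeq : M = h.roots := Multiset.eq_of_le_of_card_le hMle (by omega)
    obtain ⟨L, hL⟩ : ∃ L : ℝ, h.leadingCoeff = L := ⟨_, rfl⟩
    have hfact : h = C L * ∏ i ∈ range d, (X - C (s i)) := by
      conv_lhs => rw [← C_leadingCoeff_mul_prod_multiset_X_sub_C
        (p := h) (by rw [hcardroots, hndeg])]
      rw [hL, ← hMeq, hM, Multiset.map_map, Finset.prod_eq_multiset_prod]
      rfl
    have h0eval : 0 < eval 0 h := by
      have := hsign 0 (by omega)
      rw [hρ0] at this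
      simpa using this
    have hprodpos : 0 < ∏ i ∈ range d, (-(s i)) := by
      refine Finset.prod_pos fun i hi => ?_
      have := hsneg i (Finset.mem_range.mp hi)
      linarith
    have hleadpos : 0 < L := by
      have he := congrArg (eval 0) hfact
      rw [eval_mul, eval_C, eval_prod] at he
      simp only [eval_sub, eval_X, eval_C, zero_sub] at he
      rw [he] at h0eval
      by_contra hcon
      push_neg at hcon
      nlinarith
    -- assemble the new data
    refine ⟨L, fun i => if i = 0 then 0 else s (i - 1), hleadpos, by simp,
      ?_, ?_⟩
    · intro i j hij hj
      rw [← hd1] at hj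
      by_cases hi0 : i = 0
      · subst hi0
        simp only [if_neg (by omega : ¬ j = 0), if_pos rfl]
        exact hsneg (j - 1) (by omega)
      · simp only [if_neg hi0, if_neg (by omega : ¬ j = 0)]
        exact hsstrict (i - 1) (j - 1) (by omega) (by omega)
    · rw [← hd1, hrec, hfact, Finset.prod_range_succ']
      simp only [Nat.succ_ne_zero, if_false, Nat.add_sub_cancel, if_pos, map_zero, sub_zero,
        ite_false, ite_true, Nat.add_eq_zero, one_ne_zero, and_false, false_and]
      ring


/-- For a positive integer `θ`, the generating polynomial
`G(t) = ∑_{k=1}^n S(n,k) θ(θ-1)⋯(θ-k+1) t^k / θ^n` has only real nonpositive zeros. -/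
theorem stirlingSibuya_pgf_real_rooted (n θ : ℕ) (hn : 1 ≤ n) (hθ : 1 ≤ θ)
    (G : Polynomial ℂ)
    (hG : G = ∑ k ∈ Icc 1 n,
        Polynomial.C ((stirling2 n k : ℂ) * (∏ j ∈ range k, ((θ : ℂ) - j)) / (θ : ℂ) ^ n)
          * X ^ k) :
    ∀ z : ℂ, G.eval z = 0 → ∃ r : ℝ, r ≤ 0 ∧ z = (r : ℂ) := by
  intro z hz
  have hθC : ((θ : ℂ)) ^ n ≠ 0 := pow_ne_zero _ (by exact_mod_cast (by omega : θ ≠ 0))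
  have hGmap : G = C (((θ : ℂ) ^ n)⁻¹) * (Fp θ n).map (algebraMap ℝ ℂ) := by
    rw [hG, Fp, Polynomial.map_sum, Finset.mul_sum]
    refine Finset.sum_congr rfl fun k hk => ?_
    rw [Polynomial.map_mul, Polynomial.map_C, Polynomial.map_pow, map_X, ← mul_assoc, ← C_mul]
    congr 1
    have hcast : (algebraMap ℝ ℂ) ((stirling2 n k : ℝ) * ∏ j ∈ range k, ((θ : ℝ) - j))
        = (stirling2 n k : ℂ) * ∏ j ∈ range k, ((θ : ℂ) - j) := by
      rw [map_mul, map_prod]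
      push_cast
      rfl
    rw [hcast]
    field_simp
  obtain ⟨c, ρ, hc, hρ0, hstrict, hfac⟩ := Fp_factor θ hθ n hn
  set m := min n θ with hm
  have hm1 : 1 ≤ m := by omega
  have hmap : (Fp θ n).map (algebraMap ℝ ℂ)
      = C (c : ℂ) * ∏ i ∈ range m, (X - C ((ρ i : ℝ) : ℂ)) := by
    rw [hfac, Polynomial.map_mul, Polynomial.map_C, Polynomial.map_prod]
    simp [Polynomial.map_sub, Polynomial.map_C, Polynomial.map_X]
  rw [hGmap, hmap] at hz
  simp only [eval_mul, eval_C, eval_prod, eval_sub, eval_X] at hz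
  have hcC : ((c : ℂ)) ≠ 0 := by exact_mod_cast hc.ne'
  have hprod : ∏ i ∈ range m, (z - ((ρ i : ℝ) : ℂ)) = 0 := by
    rcases mul_eq_zero.mp hz with h1 | h1
    · exact absurd (inv_eq_zero.mp h1) hθC
    · rcases mul_eq_zero.mp h1 with h2 | h2
      · exact absurd h2 hcC
      · exact h2
  obtain ⟨i, hi, hzi⟩ := Finset.prod_eq_zero_iff.mp hprod
  refine ⟨ρ i, ?_, sub_eq_zero.mp hzi⟩
  · rcases Nat.eq_zero_or_pos i with rfl | hpos
    · exact le_of_eq hρ0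
    · have := hstrict 0 i hpos (Finset.mem_range.mp hi)
      rw [hρ0] at this
      exact this.le
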